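/- arXiv:1109.5306 — 2 statements merged into one kernel-verified Lean document; each statement's English description precedes it below -/
import Mathlib

section
/- There exists a disjoint decomposition ℝ^d = ⋃_{n=0}^∞ A_n into countably many pairwise disjoint sets A_n such that: (1) for every n ∈ ℕ and every isometry φ of ℝ^d, the symmetric difference φ(A_n) Δ A_n has cardinality strictly less than 2^ω (the cardinality of the continuum); and (2) for every n ∈ ℕ and every perfect set P ⊆ ℝ^d, the intersection A_n ∩ P has cardinality exactly 2^ω. -/
open Set
open scoped Cardinal symmDiff

namespace PartAux
noncomputable section
open Cardinal

abbrev XX (d : ℕ) := EuclideanSpace ℝ (Fin d)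
abbrev GG (d : ℕ) := XX d ≃ᵢ XX d
abbrev PP (d : ℕ) := {P : Set (XX d) // Perfect P ∧ P.Nonempty}
abbrev TT (d : ℕ) := (PP d × ℕ) ⊕ XX d
abbrev JJ : Type := (Cardinal.continuum.{0}).ord.ToType

variable {d : ℕ}

lemma mk_XX_le : #(XX d) ≤ Cardinal.continuum := by
  have : #(XX d) = #(Fin d → ℝ) := Cardinal.mk_congr (WithLp.equiv 2 _)
  rw [this, Cardinal.mk_arrow]
  simp [Cardinal.mk_real]
  exact Cardinal.power_nat_le Cardinal.aleph0_le_continuum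

lemma continuum_le_perfect {P : Set (XX d)} (hP : Perfect P) (hne : P.Nonempty) :
    Cardinal.continuum ≤ #P := by
  obtain ⟨f, hfr, -, hfi⟩ := hP.exists_nat_bool_injection hne
  have : Cardinal.continuum = #(ℕ → Bool) := by
    simp [Cardinal.mk_arrow, ← Cardinal.two_power_aleph0]
  rw [this]
  exact Cardinal.mk_le_of_injective (f := fun b => (⟨f b, hfr ⟨b, rfl⟩⟩ : P))
    (fun a b hab => hfi (by simpa using hab))

lemma mk_JJ : #JJ = Cardinal.continuum := Cardinal.mk_ord_toType _

lemma mk_Iio_lt (j : JJ) : #(Iio j) < Cardinal.continuum :=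
  Cardinal.mk_Iio_ord_toType j

lemma mk_Iic_lt (j : JJ) : #(Iic j) < Cardinal.continuum := by
  rw [← Set.Iio_insert]
  refine lt_of_le_of_lt (Cardinal.mk_insert_le) ?_
  exact Cardinal.add_lt_of_lt Cardinal.aleph0_le_continuum (mk_Iio_lt j)
    (Cardinal.one_lt_aleph0.trans_le Cardinal.aleph0_le_continuum)

lemma mk_nat_arrow_le : #(ℕ → XX d) ≤ Cardinal.continuum := by
  rw [Cardinal.mk_arrow]
  simp only [Cardinal.mk_nat, Cardinal.lift_id, Cardinal.lift_aleph0]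
  calc #(XX d) ^ (ℵ₀ : Cardinal) ≤ Cardinal.continuum ^ (ℵ₀ : Cardinal) :=
        Cardinal.power_le_power_right mk_XX_le
    _ = Cardinal.continuum := Cardinal.continuum_power_aleph0

lemma mk_GG_le : #(GG d) ≤ Cardinal.continuum := by
  have : Nonempty (XX d) := ⟨0⟩
  refine le_trans ?_ (mk_nat_arrow_le (d := d))
  refine Cardinal.mk_le_of_injective
    (f := fun φ : GG d => fun n => φ (TopologicalSpace.denseSeq (XX d) n)) ?_
  intro φ ψ hfg
  apply IsometryEquiv.ext
  have hd : Dense (Set.range (TopologicalSpace.denseSeq (XX d))) :=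
    TopologicalSpace.denseRange_denseSeq _
  have : ⇑φ = ⇑ψ := by
    apply Continuous.ext_on hd φ.continuous ψ.continuous
    rintro x ⟨n, rfl⟩
    exact congrFun hfg n
  exact fun x => congrFun this x

lemma exists_denseSeq_closed {P : Set (XX d)} (hP : IsClosed P) (hne : P.Nonempty) :
    ∃ u : ℕ → XX d, closure (Set.range u) = P := by
  have : Nonempty P := hne.to_subtype
  obtain ⟨s, hsc, hsd⟩ := TopologicalSpace.exists_countable_dense P
  have hnes : ((↑) '' s : Set (XX d)).Nonempty := (hsd.nonempty).image _
  obtain ⟨u, hu⟩ := (hsc.image ((↑) : P → XX d)).exists_eq_range hnes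
  refine ⟨u, ?_⟩
  rw [← hu]
  apply le_antisymm
  · exact closure_minimal (by rintro y ⟨⟨z, hz⟩, -, rfl⟩; exact hz) hP
  · intro y hy
    have : (⟨y, hy⟩ : P) ∈ closure s := hsd ⟨y, hy⟩
    rw [closure_subtype] at this
    exact this

lemma mk_PP_le : #(PP d) ≤ Cardinal.continuum := by
  refine le_trans ?_ (mk_nat_arrow_le (d := d))
  refine Cardinal.mk_le_of_injective
    (f := fun P : PP d => (exists_denseSeq_closed P.2.1.closed P.2.2).choose) ?_
  intro P Q hPQ
  apply Subtype.ext
  have hPQ' : (exists_denseSeq_closed P.2.1.closed P.2.2).choose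
      = (exists_denseSeq_closed Q.2.1.closed Q.2.2).choose := hPQ
  rw [← (exists_denseSeq_closed P.2.1.closed P.2.2).choose_spec,
    ← (exists_denseSeq_closed Q.2.1.closed Q.2.2).choose_spec, hPQ']

lemma mk_subgroup_closure_le {Gr : Type} [Group Gr] (S : Set Gr) (hS : S.Nonempty) :
    #(Subgroup.closure S) ≤ max #S ℵ₀ := by
  have : Nonempty S := hS.to_subtype
  have h1 : (FreeGroup.lift ((↑) : S → Gr)).range = Subgroup.closure S := by
    rw [FreeGroup.range_lift_eq_closure, Subtype.range_coe]
  rw [← h1]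
  calc #((FreeGroup.lift ((↑) : S → Gr)).range)
      = #(Set.range (FreeGroup.lift ((↑) : S → Gr))) := by
        rw [← MonoidHom.coe_range]; rfl
    _ ≤ #(FreeGroup S) := Cardinal.mk_range_le
    _ = max #S ℵ₀ := Cardinal.mk_freeGroup (α := ↥S)

lemma exists_surj {α β : Type} [Nonempty α] (hle : #α ≤ #β) :
    ∃ f : β → α, Function.Surjective f := by
  obtain ⟨f⟩ := Cardinal.le_def _ _ |>.1 hle
  exact ⟨Function.invFun f, Function.invFun_surjective f.injective⟩

instance : Nonempty JJ := by
  rw [← Cardinal.mk_ne_zero_iff (α := JJ), mk_JJ]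
  exact Cardinal.continuum_ne_zero

section Main
variable (eG : JJ → GG d) (hh : JJ → JJ × TT d)

/-- The increasing chain of subgroups. -/
def Gp (j : JJ) : Subgroup (GG d) := Subgroup.closure (eG '' Set.Iic j)

lemma Gp_mono {j k : JJ} (hjk : j ≤ k) : Gp eG j ≤ Gp eG k :=
  Subgroup.closure_mono (image_mono (Iic_subset_Iic.2 hjk))

lemma eG_mem_Gp {j k : JJ} (hjk : j ≤ k) : eG j ∈ Gp eG k :=
  Subgroup.subset_closure ⟨j, hjk, rfl⟩

lemma mk_Gp_lt (j : JJ) : #(Gp eG j) < Cardinal.continuum := by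
  refine lt_of_le_of_lt (mk_subgroup_closure_le _ ⟨eG j, ⟨j, le_refl j, rfl⟩⟩) ?_
  refine max_lt (lt_of_le_of_lt Cardinal.mk_image_le (mk_Iic_lt j)) Cardinal.aleph0_lt_continuum

/-- Orbit of a point under the subgroup at stage `j`. -/
def orb (j : JJ) (z : XX d) : Set (XX d) := {y | ∃ g ∈ Gp eG j, g z = y}

lemma self_mem_orb (j : JJ) (z : XX d) : z ∈ orb eG j z :=
  ⟨1, one_mem _, rfl⟩

lemma orb_mono {j k : JJ} (hjk : j ≤ k) (z : XX d) : orb eG j z ⊆ orb eG k z := by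
  rintro y ⟨g, hg, rfl⟩; exact ⟨g, Gp_mono eG hjk hg, rfl⟩

lemma orb_inv (j : JJ) {g : GG d} (hg : g ∈ Gp eG j) {z y : XX d} :
    y ∈ orb eG j z ↔ g y ∈ orb eG j z := by
  constructor
  · rintro ⟨g', hg', rfl⟩
    exact ⟨g * g', mul_mem hg hg', rfl⟩
  · rintro ⟨g', hg', hgy⟩
    refine ⟨g⁻¹ * g', mul_mem (inv_mem hg) hg', ?_⟩
    have : (g⁻¹ * g') z = g⁻¹ (g' z) := rfl
    rw [this, hgy, IsometryEquiv.inv_apply_self]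

open scoped Classical in
/-- One step of the recursion. -/
def pickF (s : TT d) (F : Set (XX d)) : XX d :=
  Sum.elim
    (fun pn : PP d × ℕ =>
      if hne : (pn.1.1 \ F).Nonempty then hne.some else pn.1.2.2.some)
    (fun y : XX d => y) s

/-- The transfinite sequence of picked points. -/
def xs : JJ → XX d :=
  (wellFounded_lt (α := JJ)).fix fun j rec =>
    pickF (hh j).2 {y | ∃ j', ∃ hlt : j' < j, y ∈ orb eG j (rec j' hlt)}

/-- The forbidden (saturation) set at stage `j`. -/
def Forb (j : JJ) : Set (XX d) :=
  {y | ∃ j', ∃ _hlt : j' < j, y ∈ orb eG j (xs eG hh j')}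

lemma xs_eq (j : JJ) : xs eG hh j = pickF (hh j).2 (Forb eG hh j) := by
  rw [xs, WellFounded.fix_eq]
  rfl

/-- Saturation of a set of stages. -/
def sat (j : JJ) (s : Set JJ) : Set (XX d) :=
  {y | ∃ j' ∈ s, y ∈ orb eG j (xs eG hh j')}

lemma mk_sat_lt (j : JJ) {s : Set JJ} (hs : #s < Cardinal.continuum) :
    #(sat eG hh j s) < Cardinal.continuum := by
  have hsub : sat eG hh j s ⊆
      Set.range (fun p : ↥(Gp eG j) × ↥s => (p.1 : GG d) (xs eG hh p.2)) := by
    rintro y ⟨j', hj', g, hg, rfl⟩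
    exact ⟨(⟨g, hg⟩, ⟨j', hj'⟩), rfl⟩
  refine lt_of_le_of_lt (Cardinal.mk_le_mk_of_subset hsub) ?_
  refine lt_of_le_of_lt Cardinal.mk_range_le ?_
  rw [Cardinal.mk_prod, Cardinal.lift_id, Cardinal.lift_id]
  exact Cardinal.mul_lt_of_lt Cardinal.aleph0_le_continuum (mk_Gp_lt eG j) hs

lemma Forb_eq (j : JJ) : Forb eG hh j = sat eG hh j (Iio j) := by
  ext y; constructor
  · rintro ⟨j', hlt, hy⟩; exact ⟨j', hlt, hy⟩
  · rintro ⟨j', hlt, hy⟩; exact ⟨j', hlt, hy⟩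

lemma mk_Forb_lt (j : JJ) : #(Forb eG hh j) < Cardinal.continuum := by
  rw [Forb_eq]; exact mk_sat_lt eG hh j (mk_Iio_lt j)

lemma xs_spec {j : JJ} {pn : PP d × ℕ} (ht : (hh j).2 = .inl pn) :
    xs eG hh j ∈ pn.1.1 ∧ xs eG hh j ∉ Forb eG hh j := by
  have hne : (pn.1.1 \ Forb eG hh j).Nonempty := by
    rw [Set.nonempty_iff_ne_empty]
    intro hemp
    have hsub : pn.1.1 ⊆ Forb eG hh j := by
      rw [Set.diff_eq_empty] at hemp; exact hemp
    have h1 : Cardinal.continuum ≤ #(pn.1.1) := continuum_le_perfect pn.1.2.1 pn.1.2.2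
    have h2 : #(pn.1.1) ≤ #(Forb eG hh j) := Cardinal.mk_le_mk_of_subset hsub
    exact absurd (h1.trans h2) (not_le.2 (mk_Forb_lt eG hh j))
  have : xs eG hh j = hne.some := by
    rw [xs_eq, ht]
    simp only [pickF, Sum.elim_inl]
    rw [dif_pos hne]
  rw [this]
  exact ⟨hne.some_mem.1, hne.some_mem.2⟩

lemma xs_inr {j : JJ} {y : XX d} (ht : (hh j).2 = .inr y) : xs eG hh j = y := by
  rw [xs_eq, ht]; rfl

/-- Stages that "see" the point `y`. -/
def ES (y : XX d) : Set JJ := {j | ∃ j' ≤ j, y ∈ orb eG j (xs eG hh j')}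

lemma ES_nonempty (hsurj : Function.Surjective hh) (y : XX d) : (ES eG hh y).Nonempty := by
  obtain ⟨j, hj⟩ := hsurj (Classical.arbitrary JJ, Sum.inr y)
  have ht : (hh j).2 = Sum.inr y := by rw [hj]
  refine ⟨j, j, le_refl j, ?_⟩
  rw [xs_inr eG hh ht]
  exact self_mem_orb eG j y

variable (hsurj : Function.Surjective hh)

/-- The first stage that sees `y`. -/
def jy (y : XX d) : JJ :=
  (wellFounded_lt (α := JJ)).min (ES eG hh y) (ES_nonempty eG hh hsurj y)

lemma jy_mem (y : XX d) : jy eG hh hsurj y ∈ ES eG hh y :=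
  WellFounded.min_mem _ _ _

lemma jy_min {y : XX d} {k : JJ} (hk : k ∈ ES eG hh y) : jy eG hh hsurj y ≤ k :=
  not_lt.1 (WellFounded.not_lt_min _ _ hk)

/-- Candidate picks for `y` at its first stage. -/
def PS (y : XX d) : Set JJ :=
  {j' | j' ≤ jy eG hh hsurj y ∧ y ∈ orb eG (jy eG hh hsurj y) (xs eG hh j')}

lemma PS_nonempty (y : XX d) : (PS eG hh hsurj y).Nonempty := by
  obtain ⟨j', hj', hy⟩ := jy_mem eG hh hsurj y
  exact ⟨j', hj', hy⟩

/-- The pick responsible for `y`. -/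
def pk (y : XX d) : JJ :=
  (wellFounded_lt (α := JJ)).min (PS eG hh hsurj y) (PS_nonempty eG hh hsurj y)

lemma pk_mem (y : XX d) : pk eG hh hsurj y ∈ PS eG hh hsurj y :=
  WellFounded.min_mem _ _ _

lemma pk_min {y : XX d} {k : JJ} (hk : k ∈ PS eG hh hsurj y) : pk eG hh hsurj y ≤ k :=
  not_lt.1 (WellFounded.not_lt_min _ _ hk)

/-- The label of each stage. -/
def lbl (j : JJ) : ℕ := Sum.elim (fun pn : PP d × ℕ => pn.2) (fun _ => 0) ((hh j).2)

/-- The pieces of the partition. -/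
def AA (n : ℕ) : Set (XX d) := {y | lbl hh (pk eG hh hsurj y) = n}

lemma pk_xs {j : JJ} {pn : PP d × ℕ} (ht : (hh j).2 = .inl pn) :
    pk eG hh hsurj (xs eG hh j) = j := by
  set z := xs eG hh j with hz
  obtain ⟨hzP, hzF⟩ := xs_spec eG hh ht
  have hjES : j ∈ ES eG hh z := ⟨j, le_refl j, self_mem_orb eG j z⟩
  have hjyle : jy eG hh hsurj z ≤ j := jy_min eG hh hsurj hjES
  have hjy : jy eG hh hsurj z = j := by
    rcases eq_or_lt_of_le hjyle with h | h
    · exact h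
    · exfalso
      obtain ⟨j', hj'le, hy⟩ := jy_mem eG hh hsurj z
      exact hzF ⟨j', lt_of_le_of_lt hj'le h, orb_mono eG (le_of_lt h) _ hy⟩
  have hpkle : pk eG hh hsurj z ≤ j := by
    have := pk_mem eG hh hsurj z
    rw [PS, hjy] at this
    exact this.1
  rcases eq_or_lt_of_le hpkle with h | h
  · exact h
  · exfalso
    have := pk_mem eG hh hsurj z
    rw [PS, hjy] at this
    exact hzF ⟨pk eG hh hsurj z, h, this.2⟩

lemma jy_invariant {φ : GG d} {j₀ : JJ} (hφ : ∀ j, j₀ ≤ j → φ ∈ Gp eG j)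
    {y : XX d} (hy : j₀ < jy eG hh hsurj y) (hφy : j₀ < jy eG hh hsurj (φ y)) :
    jy eG hh hsurj (φ y) = jy eG hh hsurj y := by
  apply le_antisymm
  · apply jy_min
    obtain ⟨j', hj', horb⟩ := jy_mem eG hh hsurj y
    exact ⟨j', hj', (orb_inv eG _ (hφ _ hy.le)).1 horb⟩
  · apply jy_min
    obtain ⟨j', hj', horb⟩ := jy_mem eG hh hsurj (φ y)
    exact ⟨j', hj', (orb_inv eG _ (hφ _ hφy.le)).2 horb⟩

lemma pk_invariant {φ : GG d} {j₀ : JJ} (hφ : ∀ j, j₀ ≤ j → φ ∈ Gp eG j)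
    {y : XX d} (hy : j₀ < jy eG hh hsurj y) (hφy : j₀ < jy eG hh hsurj (φ y)) :
    pk eG hh hsurj (φ y) = pk eG hh hsurj y := by
  have hjy := jy_invariant eG hh hsurj hφ hy hφy
  have hPS : PS eG hh hsurj (φ y) = PS eG hh hsurj y := by
    ext j'
    simp only [PS, mem_setOf_eq, hjy]
    constructor
    · rintro ⟨h1, h2⟩
      exact ⟨h1, (orb_inv eG _ (hφ _ hy.le)).2 h2⟩
    · rintro ⟨h1, h2⟩
      exact ⟨h1, (orb_inv eG _ (hφ _ hy.le)).1 h2⟩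
  apply le_antisymm
  · apply pk_min
    rw [hPS]
    exact pk_mem eG hh hsurj y
  · apply pk_min
    rw [← hPS]
    exact pk_mem eG hh hsurj (φ y)

end Main
end
end PartAux

/-- There is a partition `ℝ^d = ⋃ₙ Aₙ` into countably many
pairwise disjoint sets such that each `Aₙ` moves by a set of cardinality
`< 𝔠` under every isometry, and each `Aₙ` meets every (nonempty) perfect set
in a set of cardinality exactly `𝔠`. -/
theorem exists_partition_almost_isometry_invariant_meeting_perfect_sets
    (d : ℕ) :
    ∃ A : ℕ → Set (EuclideanSpace ℝ (Fin d)),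
      Pairwise (Function.onFun Disjoint A) ∧
      (⋃ n, A n) = Set.univ ∧
      (∀ (n : ℕ) (φ : EuclideanSpace ℝ (Fin d) ≃ᵢ EuclideanSpace ℝ (Fin d)),
        Cardinal.mk ↥((φ '' A n) ∆ (A n)) < Cardinal.continuum) ∧
      (∀ (n : ℕ) (P : Set (EuclideanSpace ℝ (Fin d))),
        Perfect P → P.Nonempty → Cardinal.mk ↥(A n ∩ P) = Cardinal.continuum) := by
  classical
  open PartAux in
  have hGne : Nonempty (GG d) := ⟨IsometryEquiv.refl _⟩
  obtain ⟨eG, heG⟩ : ∃ f : JJ → GG d, Function.Surjective f := by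
    apply exists_surj
    rw [mk_JJ]; exact mk_GG_le
  have hTle : (Cardinal.mk (TT d)) ≤ Cardinal.continuum := by
    rw [Cardinal.mk_sum, Cardinal.lift_id, Cardinal.lift_id, Cardinal.mk_prod,
      Cardinal.lift_id, Cardinal.lift_id, Cardinal.mk_nat]
    have h1 : (Cardinal.mk (PP d)) * ℵ₀ ≤ Cardinal.continuum :=
      le_of_le_of_eq (mul_le_mul' mk_PP_le Cardinal.aleph0_le_continuum)
        (Cardinal.mul_eq_self Cardinal.aleph0_le_continuum)
    exact le_of_le_of_eq (add_le_add h1 mk_XX_le)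
      (Cardinal.add_eq_self Cardinal.aleph0_le_continuum)
  have hTne : Nonempty (TT d) := ⟨Sum.inr 0⟩
  obtain ⟨hh, hsurj⟩ : ∃ f : JJ → JJ × TT d, Function.Surjective f := by
    apply exists_surj
    rw [Cardinal.mk_prod, Cardinal.lift_id, Cardinal.lift_id, mk_JJ]
    calc Cardinal.continuum * Cardinal.mk (TT d)
        ≤ Cardinal.continuum * Cardinal.continuum := mul_le_mul' (le_refl _) hTle
      _ = Cardinal.continuum := Cardinal.mul_eq_self Cardinal.aleph0_le_continuum
  refine ⟨AA eG hh hsurj, ?_, ?_, ?_, ?_⟩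
  · -- pairwise disjoint
    intro n m hnm
    rw [Function.onFun, Set.disjoint_left]
    intro y hyn hym
    exact hnm ((hyn : _ = n).symm.trans (hym : _ = m))
  · -- union is everything
    ext y
    simp only [Set.mem_iUnion, Set.mem_univ, iff_true]
    exact ⟨lbl hh (pk eG hh hsurj y), rfl⟩
  · -- almost invariance
    intro n φ
    obtain ⟨j₀, hj₀⟩ := heG φ
    have hφ : ∀ j, j₀ ≤ j → φ ∈ Gp eG j := fun j hj => hj₀ ▸ eG_mem_Gp eG hj
    set Bad : Set (XX d) := {y | jy eG hh hsurj y ≤ j₀} with hBaddef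
    have hBadsub : Bad ⊆ sat eG hh j₀ (Set.Iic j₀) := by
      intro y hy
      obtain ⟨j', hj'le, horb⟩ := jy_mem eG hh hsurj y
      exact ⟨j', hj'le.trans hy, orb_mono eG hy _ horb⟩
    have hBad : Cardinal.mk ↥Bad < Cardinal.continuum :=
      (Cardinal.mk_le_mk_of_subset hBadsub).trans_lt
        (mk_sat_lt eG hh j₀ (mk_Iic_lt j₀))
    have hkey : ((φ '' AA eG hh hsurj n) ∆ (AA eG hh hsurj n)) ⊆ Bad ∪ φ '' Bad := by
      intro y hy
      by_contra hcon
      rw [Set.mem_union] at hcon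
      push_neg at hcon
      obtain ⟨hyBad, hyImg⟩ := hcon
      set z := φ.symm y with hzdef
      have hzy : φ z = y := φ.apply_symm_apply y
      have hzBad : z ∉ Bad := fun hz => hyImg ⟨z, hz, hzy⟩
      have hy1 : j₀ < jy eG hh hsurj z := not_le.1 hzBad
      have hy2 : j₀ < jy eG hh hsurj (φ z) := by rw [hzy]; exact not_le.1 hyBad
      have hpk : pk eG hh hsurj (φ z) = pk eG hh hsurj z :=
        pk_invariant eG hh hsurj hφ hy1 hy2
      have hiff : y ∈ AA eG hh hsurj n ↔ z ∈ AA eG hh hsurj n := by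
        simp only [AA, Set.mem_setOf_eq, ← hzy, hpk]
      have himg : y ∈ φ '' AA eG hh hsurj n ↔ z ∈ AA eG hh hsurj n := by
        constructor
        · rintro ⟨w, hw, hwy⟩
          have : w = z := by rw [hzdef, ← hwy]; simp
          rwa [← this]
        · intro hz; exact ⟨z, hz, hzy⟩
      rw [Set.mem_symmDiff] at hy
      rcases hy with ⟨h1, h2⟩ | ⟨h1, h2⟩
      · exact h2 (hiff.2 (himg.1 h1))
      · exact h2 (himg.2 (hiff.1 h1))
    calc Cardinal.mk ↥((φ '' AA eG hh hsurj n) ∆ (AA eG hh hsurj n))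
        ≤ Cardinal.mk ↥(Bad ∪ φ '' Bad) := Cardinal.mk_le_mk_of_subset hkey
      _ ≤ Cardinal.mk ↥Bad + Cardinal.mk ↥(φ '' Bad) := Cardinal.mk_union_le _ _
      _ < Cardinal.continuum :=
          Cardinal.add_lt_of_lt Cardinal.aleph0_le_continuum hBad
            (lt_of_le_of_lt (Cardinal.mk_image_le) hBad)
  · -- meets every perfect set in continuum many points
    intro n P hP hne
    set Pn : PP d := ⟨P, hP, hne⟩ with hPn
    apply le_antisymm
    · exact le_trans (Cardinal.mk_set_le _) mk_XX_le
    · set ji : JJ → JJ := fun i => (hsurj (i, Sum.inl (Pn, n))).choose with hjidef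
      have hji : ∀ i, hh (ji i) = (i, Sum.inl (Pn, n)) :=
        fun i => (hsurj (i, Sum.inl (Pn, n))).choose_spec
      have ht : ∀ i, (hh (ji i)).2 = Sum.inl (Pn, n) := fun i => by rw [hji]
      have hmem : ∀ i, xs eG hh (ji i) ∈ AA eG hh hsurj n ∩ P := by
        intro i
        constructor
        · show lbl hh (pk eG hh hsurj (xs eG hh (ji i))) = n
          rw [pk_xs eG hh hsurj (ht i), lbl, ht i]
          rfl
        · exact (xs_spec eG hh (ht i)).1
      have hinj : Function.Injective
          (fun i : JJ => (⟨xs eG hh (ji i), hmem i⟩ : ↥(AA eG hh hsurj n ∩ P))) := by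
        intro i1 i2 hf
        have hxs : xs eG hh (ji i1) = xs eG hh (ji i2) := congrArg Subtype.val hf
        by_contra hne'
        have hjine : ji i1 ≠ ji i2 := by
          intro hjieq
          apply hne'
          have h1 : (hh (ji i1)).1 = i1 := by rw [hji]
          have h2 : (hh (ji i2)).1 = i2 := by rw [hji]
          rw [← h1, ← h2, hjieq]
        rcases lt_or_gt_of_ne hjine with hlt | hlt
        · refine (xs_spec eG hh (ht i2)).2 ⟨ji i1, hlt, ?_⟩
          rw [← hxs]
          exact self_mem_orb eG _ _
        · refine (xs_spec eG hh (ht i1)).2 ⟨ji i2, hlt, ?_⟩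
          rw [hxs]
          exact self_mem_orb eG _ _
      calc Cardinal.continuum = #JJ := mk_JJ.symm
        _ ≤ Cardinal.mk ↥(AA eG hh hsurj n ∩ P) := Cardinal.mk_le_of_injective hinj
end

section
/- Let μ be a σ-finite translation invariant measure defined on a translation invariant σ-algebra 𝒜 of subsets of ℝ^d containing all Borel subsets of ℝ^d, and suppose that the restriction of μ to the Borel sets is not σ-finite. Then for every Borel set B ⊆ ℝ^d we have either μ(B) = 0 or μ(B) = ∞. -/
open MeasureTheory Set
open scoped ENNReal

/-- The σ-algebra of Borel subsets of `ℝ^d`. -/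
noncomputable def borelSets (d : ℕ) : MeasurableSpace (EuclideanSpace ℝ (Fin d)) :=
  borel (EuclideanSpace ℝ (Fin d))

section Aux

variable {d : ℕ}

local notation "E" => EuclideanSpace ℝ (Fin d)

@[reducible] def canon (d : ℕ) : MeasurableSpace (EuclideanSpace ℝ (Fin d)) :=
  inferInstance

lemma vol_pre (x : E) (B : Set E) :
    volume ((fun t : E => x - t) ⁻¹' B) = volume B := by
  have h : (fun t : E => x - t) = (fun u : E => u + x) ∘ Neg.neg := by
    funext t; simp [sub_eq_neg_add]
  rw [h, Set.preimage_comp, Measure.measure_preimage_neg, measure_preimage_add_right]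

lemma aux_img (B : Set E) (t : E) :
    (fun x : E => x + t) '' B = (fun x : E => x - t) ⁻¹' B := by
  ext x
  constructor
  · rintro ⟨b, hb, rfl⟩
    simpa using hb
  · intro h
    exact ⟨x - t, h, sub_add_cancel x t⟩

@[reducible] noncomputable def vol (d : ℕ) : Measure (EuclideanSpace ℝ (Fin d)) :=
  volume

lemma meas_sub2 : Measurable (fun p : E × E => p.2 - p.1) :=
  (continuous_snd.sub continuous_fst).measurable

lemma meas_sub_const (t : E) : Measurable (fun x : E => x - t) :=
  (continuous_id.sub continuous_const).measurable

lemma meas_const_sub (x : E) : Measurable (fun t : E => x - t) :=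
  (continuous_const.sub continuous_id).measurable

lemma aux_meas_uncurry (m : MeasurableSpace E)
    (hle : canon d ≤ m)
    (B : Set E) (hB : MeasurableSet[canon d] B) :
    @Measurable (E × E) ℝ≥0∞
      (@Prod.instMeasurableSpace E E (canon d) m) _
      (Function.uncurry fun (t x : E) => B.indicator (1 : E → ℝ≥0∞) (x - t)) := by
  have hid : @Measurable E E m (canon d) id := measurable_id'' hle
  have hpair : @Measurable (E × E) (E × E) (@Prod.instMeasurableSpace E E (canon d) m)
      (@Prod.instMeasurableSpace E E (canon d) (canon d)) (fun p => (p.1, p.2)) :=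
    Measurable.prodMk measurable_fst (hid.comp measurable_snd)
  have hsub : @Measurable (E × E) E (@Prod.instMeasurableSpace E E (canon d) m) (canon d)
      (fun p : E × E => p.2 - p.1) := meas_sub2.comp hpair
  exact (measurable_const.indicator hB).comp hsub

lemma aux_eq (m : MeasurableSpace E)
    (hle : canon d ≤ m)
    (μ : @Measure E m) (B S : Set E) (hB : MeasurableSet[canon d] B) (t : E) :
    μ.restrict S ((fun x => x + t) '' B)
      = ∫⁻ x, B.indicator (1 : E → ℝ≥0∞) (x - t) ∂(μ.restrict S) := by
  have hpre0 : MeasurableSet[canon d] ((fun x : E => x - t) ⁻¹' B) :=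
    hB.preimage (meas_sub_const t)
  have hpre : MeasurableSet[m] ((fun x : E => x - t) ⁻¹' B) := hle _ hpre0
  have hind : (fun x : E => B.indicator (1 : E → ℝ≥0∞) (x - t))
      = ((fun x : E => x - t) ⁻¹' B).indicator (1 : E → ℝ≥0∞) := rfl
  rw [aux_img, hind, lintegral_indicator_one hpre]

lemma aux_key (m : MeasurableSpace E)
    (hle : canon d ≤ m)
    (μ : @Measure E m) (B S K : Set E) (hB : MeasurableSet[canon d] B)
    (hK : MeasurableSet[canon d] K) (hSfin : μ S ≠ ⊤) :
    ∫⁻ t in K, μ.restrict S ((fun x => x + t) '' B) ∂(vol d)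
      = ∫⁻ x, vol d ((fun t : E => x - t) ⁻¹' B ∩ K) ∂(μ.restrict S) := by
  haveI : IsFiniteMeasure (μ.restrict S) :=
    ⟨by rw [Measure.restrict_apply_univ]; exact hSfin.lt_top⟩
  calc ∫⁻ t in K, μ.restrict S ((fun x => x + t) '' B) ∂(vol d)
      = ∫⁻ t in K, ∫⁻ x, B.indicator (1 : E → ℝ≥0∞) (x - t) ∂(μ.restrict S) ∂(vol d) :=
        lintegral_congr fun t => aux_eq m hle μ B S hB t
    _ = ∫⁻ x, ∫⁻ t in K, B.indicator (1 : E → ℝ≥0∞) (x - t) ∂(vol d) ∂(μ.restrict S) :=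
        @lintegral_lintegral_swap E E (canon d) m ((vol d).restrict K) (μ.restrict S)
          inferInstance inferInstance _ ((aux_meas_uncurry m hle B hB).aemeasurable)
    _ = ∫⁻ x, vol d ((fun t : E => x - t) ⁻¹' B ∩ K) ∂(μ.restrict S) := by
        refine lintegral_congr fun x => ?_
        have hpre : MeasurableSet[canon d] ((fun t : E => x - t) ⁻¹' B) :=
          hB.preimage (meas_const_sub x)
        have hind : (fun t : E => B.indicator (1 : E → ℝ≥0∞) (x - t))
            = ((fun t : E => x - t) ⁻¹' B).indicator (1 : E → ℝ≥0∞) := rfl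
        rw [hind, lintegral_indicator_one hpre,
          @Measure.restrict_apply E (canon d) (vol d) K _ hpre]

lemma borelSets_eq_canon : borelSets d = canon d := BorelSpace.measurable_eq.symm

lemma vol_ne_zero : vol d ≠ 0 := NeZero.ne _

lemma meas_ball (x : E) (r : ℝ) : MeasurableSet[canon d] (Metric.ball x r) :=
  measurableSet_ball

lemma vol_ball_ne_top (x : E) (r : ℝ) : vol d (Metric.ball x r) ≠ ⊤ :=
  measure_ball_lt_top.ne

lemma ball_union : (⋃ n : ℕ, Metric.ball (0 : E) n) = univ :=
  Metric.iUnion_ball_nat 0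

lemma aux_total (m : MeasurableSpace E)
    (hle : canon d ≤ m)
    (μ : @Measure E m) (B S : Set E) (hB : MeasurableSet[canon d] B)
    (hSfin : μ S ≠ ⊤) :
    ∫⁻ t, μ.restrict S ((fun x => x + t) '' B) ∂(vol d) = vol d B * μ S := by
  have h := aux_key m hle μ B S univ hB MeasurableSet.univ hSfin
  rw [Measure.restrict_univ] at h
  rw [h]
  have : ∀ x : E, vol d ((fun t : E => x - t) ⁻¹' B ∩ univ) = vol d B := by
    intro x; rw [inter_univ, vol_pre]
  calc ∫⁻ x, vol d ((fun t : E => x - t) ⁻¹' B ∩ univ) ∂(μ.restrict S)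
      = ∫⁻ _, vol d B ∂(μ.restrict S) := lintegral_congr this
    _ = vol d B * μ S := by rw [lintegral_const, Measure.restrict_apply_univ]

lemma aux_meas_g (m : MeasurableSpace E)
    (hle : canon d ≤ m)
    (μ : @Measure E m) (B S : Set E) (hB : MeasurableSet[canon d] B)
    (hSfin : μ S ≠ ⊤) :
    @Measurable E ℝ≥0∞ (canon d) _
      (fun t => μ.restrict S ((fun x => x + t) '' B)) := by
  haveI : IsFiniteMeasure (μ.restrict S) :=
    ⟨by rw [Measure.restrict_apply_univ]; exact hSfin.lt_top⟩
  have h : (fun t => μ.restrict S ((fun x => x + t) '' B))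
      = fun t => ∫⁻ x, B.indicator (1 : E → ℝ≥0∞) (x - t) ∂(μ.restrict S) := by
    funext t; exact aux_eq m hle μ B S hB t
  rw [h]
  exact @Measurable.lintegral_prod_right' E E (canon d) m (μ.restrict S) inferInstance _
    (aux_meas_uncurry m hle B hB)

theorem main (m : MeasurableSpace E)
    (μ : @Measure E m)
    (hBorel : ∀ B : Set E, MeasurableSet[borelSets d] B → MeasurableSet[m] B)
    (hAinv : ∀ (A : Set E) (t : E), MeasurableSet[m] A → MeasurableSet[m] ((fun x => x + t) '' A))
    (hinv : ∀ (A : Set E) (t : E), MeasurableSet[m] A → μ ((fun x => x + t) '' A) = μ A)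
    (hsf : ∃ s : ℕ → Set E, (⋃ n, s n) = Set.univ ∧ ∀ n, μ (s n) < ⊤)
    (hnsf : ¬ (∃ s : ℕ → Set E, (⋃ n, s n) = Set.univ ∧
      ∀ n, MeasurableSet[borelSets d] (s n) ∧ μ (s n) < ⊤)) :
    ∀ B : Set E, MeasurableSet[borelSets d] B → μ B = 0 ∨ μ B = ⊤ := by
  have hle : canon d ≤ m := fun u hu => hBorel u (borelSets_eq_canon ▸ hu)
  intro B hB0
  have hB : MeasurableSet[canon d] B := borelSets_eq_canon ▸ hB0
  have hBm : MeasurableSet[m] B := hle _ hB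
  obtain ⟨s, hsU, hsfin⟩ := hsf
  set S : ℕ → Set E := fun n => ⋃ k ∈ Finset.range (n + 1), toMeasurable μ (s k) with hS
  have hSm : ∀ n, MeasurableSet[m] (S n) := fun n =>
    (Finset.range (n + 1)).measurableSet_biUnion fun k _ => measurableSet_toMeasurable μ (s k)
  have hSfin : ∀ n, μ (S n) ≠ ⊤ := by
    intro n
    refine ((measure_biUnion_finset_le _ _).trans_lt ?_).ne
    refine ENNReal.sum_lt_top.mpr fun k _ => ?_
    rw [measure_toMeasurable]; exact hsfin k
  have hSmono : Monotone S := fun a b hab =>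
    Set.biUnion_subset_biUnion_left (Finset.range_subset_range.mpr (by omega))
  have hSU : (⋃ n, S n) = univ := by
    apply eq_univ_of_univ_subset
    rw [← hsU]
    refine iUnion_subset fun n => ?_
    refine subset_iUnion_of_subset n ?_
    intro x hx
    exact Set.mem_iUnion₂.mpr ⟨n, by simp, subset_toMeasurable μ (s n) hx⟩
  rcases eq_or_ne (μ B) ⊤ with h | hBtop
  · exact Or.inr h
  left
  by_cases hvol : vol d B = 0
  · -- Lebesgue-null case
    have hzero : ∀ n, ∫⁻ t, μ.restrict (S n) ((fun x => x + t) '' B) ∂(vol d) = 0 := by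
      intro n
      rw [aux_total m hle μ B (S n) hB (hSfin n), hvol, zero_mul]
    have hae : ∀ᵐ t ∂(vol d), ∀ n, μ.restrict (S n) ((fun x => x + t) '' B) = 0 := by
      refine ae_all_iff.mpr fun n => ?_
      exact (lintegral_eq_zero_iff (aux_meas_g m hle μ B (S n) hB (hSfin n))).mp (hzero n)
    haveI : (ae (vol d)).NeBot := ae_neBot.mpr vol_ne_zero
    obtain ⟨t, ht⟩ := hae.exists
    have himg : ∀ n, μ ((fun x => x + t) '' B ∩ S n) = 0 := by
      intro n
      have h' := ht n
      rwa [@Measure.restrict_apply E m μ (S n) _ (hAinv B t hBm)] at h'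
    have hcover : (fun x => x + t) '' B = ⋃ n, ((fun x => x + t) '' B ∩ S n) := by
      rw [← inter_iUnion, hSU, inter_univ]
    have : μ ((fun x => x + t) '' B) = 0 := by
      rw [hcover]; exact measure_iUnion_null himg
    rwa [hinv B t hBm] at this
  · -- positive Lebesgue measure: contradiction with hnsf
    exfalso
    -- find a bounded positive piece
    have hcoverB : B = ⋃ n : ℕ, (B ∩ Metric.ball 0 n) := by
      rw [← inter_iUnion, ball_union, inter_univ]
    have hsup : vol d B = ⨆ n : ℕ, vol d (B ∩ Metric.ball 0 n) := by
      conv_lhs => rw [hcoverB]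
      exact Directed.measure_iUnion
        ((monotone_nat_of_le_succ fun n => inter_subset_inter_right _
          (Metric.ball_subset_ball (by exact_mod_cast Nat.le_succ n))).directed_le)
    obtain ⟨R, hR0⟩ : ∃ R : ℕ, vol d (B ∩ Metric.ball 0 R) ≠ 0 := by
      by_contra hall
      push_neg at hall
      apply hvol
      rw [hsup]
      simp [hall]
    set B₀ : Set E := B ∩ Metric.ball 0 R with hB₀def
    have hB₀ : MeasurableSet[canon d] B₀ := hB.inter (meas_ball 0 R)
    have hB₀m : MeasurableSet[m] B₀ := hle _ hB₀
    have hB₀fin : μ B₀ ≠ ⊤ := ((measure_mono inter_subset_left).trans_lt hBtop.lt_top).ne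
    -- every ball has finite measure
    have claim : ∀ r : ℝ, μ (Metric.ball (0 : E) r) ≠ ⊤ := by
      intro r
      set C := Metric.ball (0 : E) r with hC
      set K := Metric.ball (0 : E) (r + R) with hK
      have bound : ∀ n, vol d B₀ * μ (S n ∩ C) ≤ μ B₀ * vol d K := by
        intro n
        have hfin : μ (S n ∩ C) ≠ ⊤ :=
          ((measure_mono inter_subset_left).trans_lt (hSfin n).lt_top).ne
        have key := aux_key m hle μ B₀ (S n ∩ C) K hB₀ (meas_ball 0 (r + R)) hfin
        -- lower bound for the RHS of key
        have hSC : MeasurableSet[m] (S n ∩ C) := (hSm n).inter (hle _ (meas_ball 0 r))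
        have hptwise : ∀ x ∈ S n ∩ C,
            vol d ((fun t : E => x - t) ⁻¹' B₀ ∩ K) = vol d B₀ := by
          intro x hx
          have hsub : (fun t : E => x - t) ⁻¹' B₀ ⊆ K := by
            intro t htmem
            have h1 : ‖x - t‖ < R := by
              have := htmem.2
              rwa [Metric.mem_ball, dist_zero_right] at this
            have h2 : ‖x‖ < r := by
              have := hx.2
              rwa [Metric.mem_ball, dist_zero_right] at this
            rw [Metric.mem_ball, dist_zero_right]
            calc ‖t‖ = ‖x - (x - t)‖ := by rw [sub_sub_cancel]
              _ ≤ ‖x‖ + ‖x - t‖ := norm_sub_le _ _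
              _ < r + R := add_lt_add h2 h1
          rw [inter_eq_self_of_subset_left hsub, vol_pre]
        have hRHS : ∫⁻ x in S n ∩ C, vol d ((fun t : E => x - t) ⁻¹' B₀ ∩ K) ∂μ
            = vol d B₀ * μ (S n ∩ C) := by
          rw [setLIntegral_congr_fun_ae hSC (ae_of_all _ hptwise), setLIntegral_const]
        have hLHS : ∫⁻ t in K, μ.restrict (S n ∩ C) ((fun x => x + t) '' B₀) ∂(vol d)
            ≤ μ B₀ * vol d K := by
          have hmono : ∀ t : E, μ.restrict (S n ∩ C) ((fun x => x + t) '' B₀) ≤ μ B₀ := by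
            intro t
            rw [@Measure.restrict_apply E m μ (S n ∩ C) _ (hAinv B₀ t hB₀m)]
            exact (measure_mono inter_subset_left).trans (hinv B₀ t hB₀m).le
          calc ∫⁻ t in K, μ.restrict (S n ∩ C) ((fun x => x + t) '' B₀) ∂(vol d)
              ≤ ∫⁻ _ in K, μ B₀ ∂(vol d) := lintegral_mono fun t => hmono t
            _ = μ B₀ * vol d K := setLIntegral_const K (μ B₀)
        calc vol d B₀ * μ (S n ∩ C)
            = ∫⁻ t in K, μ.restrict (S n ∩ C) ((fun x => x + t) '' B₀) ∂(vol d) := by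
              rw [key]; exact hRHS.symm
          _ ≤ μ B₀ * vol d K := hLHS
      -- conclude finiteness of μ C
      intro hCtop
      have hCm : C = ⋃ k, (S k ∩ C) := by rw [← iUnion_inter, hSU, univ_inter]
      have hμC : μ C = ⨆ k, μ (S k ∩ C) := by
        conv_lhs => rw [hCm]
        have hmon : Monotone fun k => S k ∩ C :=
          fun a b hab => inter_subset_inter (hSmono hab) subset_rfl
        exact Directed.measure_iUnion hmon.directed_le
      have hfinal : vol d B₀ * μ C ≤ μ B₀ * vol d K := by
        rw [hμC, ENNReal.mul_iSup]
        exact iSup_le bound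
      rw [hCtop, ENNReal.mul_top hR0] at hfinal
      exact ENNReal.mul_ne_top hB₀fin (vol_ball_ne_top 0 (r + R)) (top_le_iff.mp hfinal)
    apply hnsf
    refine ⟨fun n => Metric.ball 0 n, ball_union, fun n => ?_⟩
    exact ⟨borelSets_eq_canon.symm ▸ meas_ball 0 n, (claim n).lt_top⟩


end Aux

/-- If a σ-finite translation invariant measure on a
translation invariant σ-algebra containing the Borel subsets of ℝ^d is not
σ-finite when restricted to the Borel sets, then every Borel set has measure
`0` or `∞`. -/
theorem measure_borel_eq_zero_or_top_of_not_sigmaFinite_on_borel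
    (d : ℕ) (m : MeasurableSpace (EuclideanSpace ℝ (Fin d)))
    (μ : @Measure (EuclideanSpace ℝ (Fin d)) m)
    (hBorel : ∀ B : Set (EuclideanSpace ℝ (Fin d)),
      MeasurableSet[borelSets d] B → MeasurableSet[m] B)
    (hAinv : ∀ (A : Set (EuclideanSpace ℝ (Fin d))) (t : EuclideanSpace ℝ (Fin d)),
      MeasurableSet[m] A → MeasurableSet[m] ((fun x => x + t) '' A))
    (hinv : ∀ (A : Set (EuclideanSpace ℝ (Fin d))) (t : EuclideanSpace ℝ (Fin d)),
      MeasurableSet[m] A → μ ((fun x => x + t) '' A) = μ A)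
    (hsf : ∃ s : ℕ → Set (EuclideanSpace ℝ (Fin d)),
      (⋃ n, s n) = Set.univ ∧ ∀ n, μ (s n) < ⊤)
    (hnsf : ¬ (∃ s : ℕ → Set (EuclideanSpace ℝ (Fin d)),
      (⋃ n, s n) = Set.univ ∧
      ∀ n, MeasurableSet[borelSets d] (s n) ∧ μ (s n) < ⊤)) :
    ∀ B : Set (EuclideanSpace ℝ (Fin d)), MeasurableSet[borelSets d] B →
      μ B = 0 ∨ μ B = ⊤ := by
  exact main m μ hBorel hAinv hinv hsf hnsf
end
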